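/- Consider minimizing Φ(t) + h(t) over dom h, with h convex and Φ convex, using USTM with a (δ_k, 0)-inexact first-order oracle at step k satisfying Φ̃(t') + δ_k ≥ Φ(t') ≥ Φ̃(t) + ⟨∇̃Φ(t), t' − t⟩ for all t, t' ∈ dom h, with δ_k = α_{k+1} ε / (4 A_{k+1}), and inner stopping criterion Φ̃(t^{k+1}) ≤ Φ̃(y^{k+1}) + ⟨∇̃Φ(y^{k+1}), t^{k+1} − y^{k+1}⟩ + (L_{k+1}/2)‖t^{k+1} − y^{k+1}‖² + (α_{k+1}/(2A_{k+1}))ε. Then for every k > 0 and every t ∈ dom h: Φ(t^k) + h(t^k) ≤ (1/A_k)φ_k(t) − (1/(2A_k))‖t − u^k‖² + 3ε/4, where φ_k is the model function φ₀(t) = ½‖t − t⁰‖², φ_{k+1}(t) = φ_k(t) + α_{k+1}[Φ̃(y^{k+1}) + ⟨∇̃Φ(y^{k+1}), t − y^{k+1}⟩ + h(t)]. -/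

import Mathlib

open Real

lemma quad_comb {E : Type*} [NormedAddCommGroup E] [InnerProductSpace ℝ E]
    (t0 x y : E) {a b : ℝ} (hab : a + b = 1) :
    (1 / 2) * ‖a • x + b • y - t0‖ ^ 2 =
      a * ((1 / 2) * ‖x - t0‖ ^ 2) + b * ((1 / 2) * ‖y - t0‖ ^ 2)
        - a * b * ((1 / 2) * ‖x - y‖ ^ 2) := by
  have hz : a • x + b • y - t0 = a • (x - t0) + b • (y - t0) := by
    have h1 : t0 = a • t0 + b • t0 := by rw [← add_smul, hab, one_smul]
    rw [smul_sub, smul_sub]; nth_rewrite 1 [h1]; abel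
  have hxy : x - y = (x - t0) - (y - t0) := by abel
  rw [hz, hxy]
  set p := x - t0
  set q := y - t0
  have e1 : ‖a • p + b • q‖ ^ 2 = a^2*‖p‖^2 + 2*(a*b*inner ℝ p q) + b^2*‖q‖^2 := by
    rw [norm_add_sq_real, norm_smul, norm_smul, real_inner_smul_left, real_inner_smul_right,
      mul_pow, mul_pow, Real.norm_eq_abs, Real.norm_eq_abs, sq_abs, sq_abs]
    ring
  have e2 : ‖p - q‖ ^ 2 = ‖p‖^2 - 2*inner ℝ p q + ‖q‖^2 := norm_sub_sq_real p q
  rw [e1, e2]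
  linear_combination (a/2*‖p‖^2 + b/2*‖q‖^2) * hab

lemma sc_min {E : Type*} [NormedAddCommGroup E] [InnerProductSpace ℝ E]
    {D : Set E} (hD : Convex ℝ D) (f : E → ℝ)
    (hsc : ∀ x ∈ D, ∀ y ∈ D, ∀ a b : ℝ, 0 ≤ a → 0 ≤ b → a + b = 1 →
      f (a • x + b • y) ≤ a * f x + b * f y - a * b * ((1/2) * ‖x - y‖ ^ 2))
    {u : E} (huD : u ∈ D) (hmin : ∀ t ∈ D, f u ≤ f t) :
    ∀ t ∈ D, f u + (1/2) * ‖t - u‖ ^ 2 ≤ f t := by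
  intro t htm
  set c : ℝ := (1/2) * ‖t - u‖ ^ 2 with hc
  have hc0 : 0 ≤ c := by positivity
  have hlam : ∀ l : ℝ, 0 < l → l < 1 → f u + (1 - l) * c ≤ f t := by
    intro l hl0 hl1
    have hz : l • t + (1 - l) • u ∈ D := hD htm huD hl0.le (by linarith) (by ring)
    have h1 := hmin _ hz
    have h2 := hsc t htm u huD l (1 - l) hl0.le (by linarith) (by ring)
    rw [hc]
    have h3 : l * (f u + (1 - l) * ((1/2) * ‖t - u‖ ^ 2)) ≤ l * f t := by nlinarith
    exact (mul_le_mul_iff_right₀ hl0).mp h3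
  by_contra hcon
  push_neg at hcon
  set d : ℝ := f u + c - f t with hd
  have hd0 : 0 < d := by linarith
  rcases eq_or_lt_of_le hc0 with hceq | hcpos
  · have := hlam (1/2) (by norm_num) (by norm_num)
    nlinarith
  · set l : ℝ := min (1/2) (d / (2 * c)) with hl
    have hl0 : 0 < l := lt_min (by norm_num) (by positivity)
    have hl1 : l < 1 := lt_of_le_of_lt (min_le_left _ _) (by norm_num)
    have h1 := hlam l hl0 hl1
    have h2 : l * c ≤ d / 2 := by
      have : l ≤ d / (2 * c) := min_le_right _ _
      calc l * c ≤ (d / (2 * c)) * c := by nlinarith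
        _ = d / 2 := by field_simp
    linarith

/-- Key bound for USTM with a (δₖ,0)-inexact oracle (Lemma 3 of the paper):
`Φ(tᵏ) + h(tᵏ) ≤ (1/Aₖ)φₖ(t) − (1/(2Aₖ))‖t − uᵏ‖² + 3ε/4` for all `t ∈ dom h`. -/
theorem stmt8 {E : Type*} [NormedAddCommGroup E] [InnerProductSpace ℝ E]
    (D : Set E) (h : E → ℝ) (hh : ConvexOn ℝ D h)
    (Φ : E → ℝ) (hΦ : ConvexOn ℝ D Φ)
    (ε : ℝ) (hε : 0 < ε)
    (Φt : E → ℝ) (g : E → E)  -- inexact oracle Φ̃, ∇̃Φ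
    (α A L : ℕ → ℝ) (tseq useq yseq : ℕ → E) (t0 : E)
    (φ : ℕ → E → ℝ)
    (hA0 : A 0 = 0) (hAs : ∀ k, A (k + 1) = A k + α (k + 1))
    (hαpos : ∀ k, 0 < α (k + 1)) (hLpos : ∀ k, 0 < L (k + 1))
    (hαL : ∀ k, L (k + 1) * α (k + 1) ^ 2 = A (k + 1))
    (ht0 : tseq 0 = t0) (hu0 : useq 0 = t0)
    (hφ0 : ∀ t, φ 0 t = (1 / 2) * ‖t - t0‖ ^ 2)
    (hφs : ∀ k t, φ (k + 1) t = φ k t +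
        α (k + 1) * (Φt (yseq (k + 1)) +
          (inner ℝ (g (yseq (k + 1))) (t - yseq (k + 1)) : ℝ) + h t))
    (hy : ∀ k, yseq (k + 1) = (A (k + 1))⁻¹ • (α (k + 1) • useq k + A k • tseq k))
    (ht : ∀ k, tseq (k + 1) = (A (k + 1))⁻¹ • (α (k + 1) • useq (k + 1) + A k • tseq k))
    (hu : ∀ k, useq (k + 1) ∈ D ∧ ∀ t ∈ D, φ (k + 1) (useq (k + 1)) ≤ φ (k + 1) t)
    -- (δₖ,0)-inexact oracle with δₖ = α_{k+1} ε / (4 A_{k+1})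
    (horacle : ∀ k, ∀ t ∈ D, ∀ t' ∈ D,
        Φ t' ≤ Φt t' + α (k + 1) * ε / (4 * A (k + 1)) ∧
        Φt t + (inner ℝ (g t) (t' - t) : ℝ) ≤ Φ t')
    -- inner stopping criterion
    (hstop : ∀ k, Φt (tseq (k + 1)) ≤ Φt (yseq (k + 1)) +
        (inner ℝ (g (yseq (k + 1))) (tseq (k + 1) - yseq (k + 1)) : ℝ) +
        L (k + 1) / 2 * ‖tseq (k + 1) - yseq (k + 1)‖ ^ 2 +
        α (k + 1) / (2 * A (k + 1)) * ε)
    (htD : ∀ k, tseq k ∈ D) (hyD : ∀ k, yseq (k + 1) ∈ D) :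
    ∀ k : ℕ, 0 < k → ∀ t ∈ D,
      Φ (tseq k) + h (tseq k) ≤
        (1 / A k) * φ k t - (1 / (2 * A k)) * ‖t - useq k‖ ^ 2 + 3 * ε / 4 := by
  have hD : Convex ℝ D := hh.1
  have hAnn : ∀ k, 0 ≤ A k := by
    intro k
    induction k with
    | zero => rw [hA0]
    | succ n ih => rw [hAs n]; have := hαpos n; linarith
  have hApos : ∀ k, 0 < A (k + 1) := by
    intro k; rw [hAs k]; have := hαpos k; have := hAnn k; linarith
  have huD : ∀ k, useq k ∈ D := by
    intro k
    cases k with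
    | zero => rw [hu0, ← ht0]; exact htD 0
    | succ n => exact (hu n).1
  -- strong convexity of φ k on D
  have hφsc : ∀ k, ∀ x ∈ D, ∀ y ∈ D, ∀ a b : ℝ, 0 ≤ a → 0 ≤ b → a + b = 1 →
      φ k (a • x + b • y) ≤ a * φ k x + b * φ k y - a * b * ((1/2) * ‖x - y‖ ^ 2) := by
    intro k
    induction k with
    | zero =>
      intro x _ y _ a b _ _ hab
      rw [hφ0, hφ0, hφ0]
      exact le_of_eq (quad_comb t0 x y hab)
    | succ n ih =>
      intro x hx y hy a b ha hb hab
      rw [hφs, hφs, hφs]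
      have hih := ih x hx y hy a b ha hb hab
      have hconv := hh.2 hx hy ha hb hab
      simp only [smul_eq_mul] at hconv
      have hlin : (inner ℝ (g (yseq (n+1))) ((a • x + b • y) - yseq (n+1)) : ℝ) =
          a * inner ℝ (g (yseq (n+1))) (x - yseq (n+1)) +
          b * inner ℝ (g (yseq (n+1))) (y - yseq (n+1)) := by
        have hz : (a • x + b • y) - yseq (n+1) =
            a • (x - yseq (n+1)) + b • (y - yseq (n+1)) := by
          have h1 : yseq (n+1) = a • yseq (n+1) + b • yseq (n+1) := by
            rw [← add_smul, hab, one_smul]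
          rw [smul_sub, smul_sub]; nth_rewrite 1 [h1]; abel
        rw [hz, inner_add_right, real_inner_smul_right, real_inner_smul_right]
      rw [hlin]
      have hα := hαpos n
      have hM := mul_le_mul_of_nonneg_left hconv hα.le
      have hrhs : a * (φ n x + α (n+1) * (Φt (yseq (n+1)) +
            (inner ℝ (g (yseq (n+1))) (x - yseq (n+1)) : ℝ) + h x)) +
          b * (φ n y + α (n+1) * (Φt (yseq (n+1)) +
            (inner ℝ (g (yseq (n+1))) (y - yseq (n+1)) : ℝ) + h y)) -
          a * b * ((1/2) * ‖x - y‖ ^ 2)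
          = a * φ n x + b * φ n y - a * b * ((1/2) * ‖x - y‖ ^ 2)
            + α (n+1) * Φt (yseq (n+1))
            + α (n+1) * (a * (inner ℝ (g (yseq (n+1))) (x - yseq (n+1)) : ℝ)
                + b * (inner ℝ (g (yseq (n+1))) (y - yseq (n+1)) : ℝ))
            + α (n+1) * (a * h x + b * h y) := by
        linear_combination (α (n+1) * Φt (yseq (n+1))) * hab
      rw [hrhs]
      nlinarith [hih, hM]
  -- minimizer property of useq k
  have hminall : ∀ k, ∀ t ∈ D, φ k (useq k) + (1/2) * ‖t - useq k‖ ^ 2 ≤ φ k t := by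
    intro k
    cases k with
    | zero =>
      intro t _
      rw [hφ0, hφ0, hu0]
      simp
    | succ n => exact sc_min hD _ (hφsc (n+1)) (hu n).1 (hu n).2
  -- key invariant
  have key : ∀ k, A k * (Φ (tseq k) + h (tseq k)) ≤ φ k (useq k) + 3 * ε / 4 * A k := by
    intro k
    induction k with
    | zero =>
      rw [hA0, hu0, hφ0]
      simp
    | succ n ih =>
      have hα := hαpos n
      have hA' := hApos n
      have hAn := hAnn n
      have hAs' := hAs n
      have hL := hLpos n
      set y := yseq (n+1) with hydef
      set u' := useq (n+1) with hu'def
      set un := useq n with hundef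
      set tk := tseq n with htkdef
      set t' := tseq (n+1) with ht'def
      set α' := α (n+1) with hα'def
      set A' := A (n+1) with hA'def2
      set An := A n with hAndef
      set Lc := L (n+1) with hLdef
      have hαL' : Lc * α' ^ 2 = A' := hαL n
      have hyA : A' • y = α' • un + An • tk := by
        rw [hydef, hy n, smul_inv_smul₀ (ne_of_gt hA')]
      have htA : A' • t' = α' • u' + An • tk := by
        rw [ht'def, ht n, smul_inv_smul₀ (ne_of_gt hA')]
      have ht'comb : t' = (α'/A') • u' + (An/A') • tk := by
        rw [ht'def, ht n, smul_add, smul_smul, smul_smul, inv_mul_eq_div, inv_mul_eq_div]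
      -- F4: convexity of h
      have hF4 : A' * h t' ≤ α' * h u' + An * h tk := by
        have ha' : (0:ℝ) ≤ α'/A' := by positivity
        have hb' : (0:ℝ) ≤ An/A' := by positivity
        have hab' : α'/A' + An/A' = 1 := by
          rw [← add_div, div_eq_one_iff_eq (ne_of_gt hA')]
          linarith
        have hcomb := hh.2 (huD (n+1)) (htD n) ha' hb' hab'
        rw [← ht'comb] at hcomb
        simp only [smul_eq_mul] at hcomb
        have h2 : A' * h t' ≤ A' * (α'/A' * h u' + An/A' * h tk) :=
          mul_le_mul_of_nonneg_left hcomb hA'.le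
        calc A' * h t' ≤ A' * (α'/A' * h u' + An/A' * h tk) := h2
          _ = α' * h u' + An * h tk := by field_simp
      -- vector identity
      have hv1 : An • (tk - y) + α' • (u' - y) = A' • (t' - y) := by
        have hy2 : An • y + α' • y = α' • un + An • tk := by
          rw [← add_smul, ← hAs', hyA]
        have step : An • (tk - y) + α' • (u' - y)
            = α' • u' + An • tk - (An • y + α' • y) := by
          rw [smul_sub, smul_sub]; abel
        rw [step, hy2, smul_sub, htA, hyA]
      have hF7 : A' * (inner ℝ (g y) (t' - y) : ℝ) =
          An * (inner ℝ (g y) (tk - y) : ℝ) + α' * (inner ℝ (g y) (u' - y) : ℝ) := by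
        have := congrArg (fun v : E => (inner ℝ (g y) v : ℝ)) hv1
        simpa [inner_add_right, real_inner_smul_right] using this.symm
      have hv2 : t' - y = (α'/A') • (u' - un) := by
        have h1 : A' • (t' - y) = α' • (u' - un) := by
          rw [smul_sub, htA, hyA, smul_sub]; abel
        have h2 : t' - y = A'⁻¹ • (A' • (t' - y)) := by
          rw [inv_smul_smul₀ (ne_of_gt hA')]
        rw [h2, h1, smul_smul, inv_mul_eq_div]
      have hF8 : ‖u' - un‖ ^ 2 = A' * Lc * ‖t' - y‖ ^ 2 := by
        have h1 : ‖t' - y‖ ^ 2 = (α'/A')^2 * ‖u' - un‖ ^ 2 := by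
          rw [hv2, norm_smul, mul_pow, Real.norm_eq_abs, sq_abs]
        rw [h1]
        field_simp
        linear_combination (-‖u' - un‖ ^ 2) * hαL'
      -- oracle and stopping facts
      have hF3 : Φt y + (inner ℝ (g y) (tk - y) : ℝ) ≤ Φ tk :=
        (horacle n y (hyD n) tk (htD n)).2
      have hF6 : Φ t' ≤ Φt t' + α' * ε / (4 * A') :=
        (horacle n t' (htD (n+1)) t' (htD (n+1))).1
      have hF5 : Φt t' ≤ Φt y + (inner ℝ (g y) (t' - y) : ℝ)
          + Lc / 2 * ‖t' - y‖ ^ 2 + α' / (2 * A') * ε := hstop n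
      have hF1 : φ n un + (1/2) * ‖u' - un‖ ^ 2 ≤ φ n u' := hminall n u' (huD (n+1))
      have hφu' : φ (n+1) u' = φ n u' + α' * (Φt y + (inner ℝ (g y) (u' - y) : ℝ) + h u') := by
        rw [hu'def, hφs]
      -- multiplied-out versions
      have hF6' : A' * Φ t' ≤ A' * Φt t' + α' * ε / 4 := by
        have h1 := mul_le_mul_of_nonneg_left hF6 hA'.le
        have heq : A' * (Φt t' + α' * ε / (4 * A')) = A' * Φt t' + α' * ε / 4 := by
          field_simp
        rw [heq] at h1
        exact h1
      have hF5' : A' * Φt t' ≤ A' * Φt y + A' * (inner ℝ (g y) (t' - y) : ℝ)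
          + A' * (Lc / 2 * ‖t' - y‖ ^ 2) + α' * ε / 2 := by
        have h1 := mul_le_mul_of_nonneg_left hF5 hA'.le
        have heq : A' * (Φt y + (inner ℝ (g y) (t' - y) : ℝ)
            + Lc / 2 * ‖t' - y‖ ^ 2 + α' / (2 * A') * ε)
            = A' * Φt y + A' * (inner ℝ (g y) (t' - y) : ℝ)
              + A' * (Lc / 2 * ‖t' - y‖ ^ 2) + α' * ε / 2 := by
          field_simp
        rw [heq] at h1
        exact h1
      have hF3' : An * Φt y + An * (inner ℝ (g y) (tk - y) : ℝ) ≤ An * Φ tk := by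
        have h1 := mul_le_mul_of_nonneg_left hF3 hAn
        rw [mul_add] at h1
        exact h1
      have hsplit1 : A' * Φt y = An * Φt y + α' * Φt y := by rw [hAs']; ring
      have hsplit2 : 3 * ε / 4 * A' = 3 * ε / 4 * An + 3 * ε / 4 * α' := by
        rw [hAs']; ring
      have hquad : A' * (Lc / 2 * ‖t' - y‖ ^ 2) = (1/2) * ‖u' - un‖ ^ 2 := by
        rw [hF8]; ring
      rw [hφu']
      have hgoal : A' * (Φ t' + h t') = A' * Φ t' + A' * h t' := by ring
      rw [hgoal]
      have hεα : 0 < α' * ε := mul_pos hα hε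
      linarith [ih, hF1, hF4, hF7, hF6', hF5', hF3', hsplit1, hsplit2, hquad]
  -- conclusion
  intro k hk t htmem
  obtain ⟨m, rfl⟩ : ∃ m, k = m + 1 := ⟨k - 1, (Nat.succ_pred_eq_of_pos hk).symm⟩
  have hA := hApos m
  have h1 : A (m+1) * (Φ (tseq (m+1)) + h (tseq (m+1))) ≤
      φ (m+1) t - (1/2) * ‖t - useq (m+1)‖ ^ 2 + 3 * ε / 4 * A (m+1) := by
    have hk1 := key (m+1)
    have hk2 := hminall (m+1) t htmem
    linarith
  have h2 : Φ (tseq (m+1)) + h (tseq (m+1)) ≤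
      (φ (m+1) t - (1/2) * ‖t - useq (m+1)‖ ^ 2 + 3 * ε / 4 * A (m+1)) / A (m+1) := by
    rw [le_div_iff₀ hA]
    linarith [h1]
  refine h2.trans (le_of_eq ?_)
  field_simp
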